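/- If $f = \sum_{j=1}^N \lambda_j a_j$ is a finite linear combination of $L^2_k$-atoms $a_j$ (each supported in a closed ball centered at the origin) with scalars $\lambda_j$, then $\|\mathcal{H}_k f\|_{L^1(\nu_k)} \leq 2 \sum_{j=1}^N |\lambda_j|$. -/

import Mathlib

open MeasureTheory Metric Filter Topology Set
open scoped ENNReal NNReal

noncomputable section

/-- The Dunkl weight function. -/
def dunklWeight {d : ℕ} (Rp : Finset (EuclideanSpace ℝ (Fin d)))
    (k : EuclideanSpace ℝ (Fin d) → ℝ) (x : EuclideanSpace ℝ (Fin d)) : ℝ :=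
  ∏ ξ ∈ Rp, |(inner ℝ ξ x : ℝ)| ^ (2 * k ξ)

/-- The weighted measure `ν_k`. -/
def dunklMeasure {d : ℕ} (Rp : Finset (EuclideanSpace ℝ (Fin d)))
    (k : EuclideanSpace ℝ (Fin d) → ℝ) : Measure (EuclideanSpace ℝ (Fin d)) :=
  volume.withDensity fun x => ENNReal.ofReal (dunklWeight Rp k x)

section Aux

variable {d : ℕ}

private lemma aux_nontrivial (hd : 0 < d) : Nontrivial (EuclideanSpace ℝ (Fin d)) := by
  refine ⟨⟨EuclideanSpace.single ⟨0, hd⟩ (1:ℝ), 0, fun h => one_ne_zero (α := ℝ) ?_⟩⟩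
  simpa using congrArg (fun v => v ⟨0, hd⟩) h

private lemma dunklWeight_continuous (Rp : Finset (EuclideanSpace ℝ (Fin d)))
    (k : EuclideanSpace ℝ (Fin d) → ℝ) (hk : ∀ ξ ∈ Rp, 0 ≤ k ξ) :
    Continuous (dunklWeight Rp k) := by
  refine continuous_finset_prod _ fun ξ hξ => ?_
  exact (Real.continuous_rpow_const (by have := hk ξ hξ; linarith)).comp
    (continuous_const.inner continuous_id).abs

private lemma dunklMeasure_ball_ne_top (Rp : Finset (EuclideanSpace ℝ (Fin d)))
    (k : EuclideanSpace ℝ (Fin d) → ℝ) (hk : ∀ ξ ∈ Rp, 0 ≤ k ξ) (r : ℝ) :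
    dunklMeasure Rp k (closedBall 0 r) ≠ ⊤ := by
  rw [dunklMeasure, withDensity_apply _ measurableSet_closedBall]
  obtain ⟨C, hC⟩ := (isCompact_closedBall (0 : EuclideanSpace ℝ (Fin d)) r).exists_bound_of_continuousOn
    (dunklWeight_continuous Rp k hk).continuousOn
  have hb : ∫⁻ x in closedBall (0 : EuclideanSpace ℝ (Fin d)) r, ENNReal.ofReal (dunklWeight Rp k x) ∂volume
      ≤ ∫⁻ _ in closedBall (0 : EuclideanSpace ℝ (Fin d)) r, ENNReal.ofReal C ∂volume := by
    refine setLIntegral_mono measurable_const fun x hx => ?_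
    refine ENNReal.ofReal_le_ofReal ?_
    have := hC x hx
    rw [Real.norm_eq_abs] at this
    exact (le_abs_self _).trans this
  refine ne_top_of_le_ne_top ?_ hb
  rw [setLIntegral_const]
  exact (ENNReal.mul_lt_top ENNReal.ofReal_lt_top measure_closedBall_lt_top).ne

end Aux

private lemma measure_setOf_lt (hd : 0 < d) {ν : Measure (EuclideanSpace ℝ (Fin d))}
    (hac : ν ≪ (volume : Measure (EuclideanSpace ℝ (Fin d)))) (c : ℝ≥0∞) :
    ν {x : EuclideanSpace ℝ (Fin d) | ν (closedBall 0 ‖x‖) < c} ≤ c := by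
  haveI := aux_nontrivial hd
  set φ : ℝ → ℝ≥0∞ := fun r => ν (closedBall 0 r) with hφ
  have hφm : Monotone φ := fun r₁ r₂ h => measure_mono (closedBall_subset_closedBall h)
  set T := {x : EuclideanSpace ℝ (Fin d) | φ ‖x‖ < c} with hT
  rcases eq_empty_or_nonempty T with hTe | hTne
  · rw [hTe]; simp
  set s := {r : ℝ | φ r < c} with hs
  have hslow : ∀ r r' : ℝ, r ≤ r' → r' ∈ s → r ∈ s := fun r r' h h' => lt_of_le_of_lt (hφm h) h'
  have hmono : ∀ ρ : ℝ, Monotone fun n : ℕ => closedBall (0 : EuclideanSpace ℝ (Fin d)) (ρ - 1/(n+1)) := by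
    intro ρ n m hnm
    refine closedBall_subset_closedBall ?_
    have h1 : (1:ℝ)/(m+1) ≤ 1/(n+1) := by
      apply one_div_le_one_div_of_le (by positivity)
      have := (Nat.cast_le (α := ℝ)).mpr hnm; linarith
    linarith
  by_cases hbdd : BddAbove s
  · obtain ⟨x₀, hx₀⟩ := hTne
    have hsne : s.Nonempty := ⟨‖x₀‖, hx₀⟩
    set ρ := sSup s with hρ
    have hcov : ball (0 : EuclideanSpace ℝ (Fin d)) ρ = ⋃ n : ℕ, closedBall 0 (ρ - 1/(n+1)) := by
      ext x
      simp only [mem_ball, mem_iUnion, mem_closedBall, dist_zero_right]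
      constructor
      · intro hx
        obtain ⟨n, hn⟩ := exists_nat_one_div_lt (sub_pos.mpr hx)
        exact ⟨n, by push_cast at hn ⊢; linarith⟩
      · rintro ⟨n, hn⟩
        have h1 : (0:ℝ) < 1/(n+1) := by positivity
        linarith
    have hball : ν (ball (0 : EuclideanSpace ℝ (Fin d)) ρ) ≤ c := by
      rw [hcov, Monotone.measure_iUnion (hmono ρ)]
      refine iSup_le fun n => ?_
      have hlt : ρ - 1/(n+1) < ρ := by
        have h1 : (0:ℝ) < 1/(n+1) := by positivity
        linarith
      obtain ⟨r, hr, hr'⟩ := exists_lt_of_lt_csSup hsne hlt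
      exact (hslow _ _ hr'.le hr).le
    have hTsub : T ⊆ ball (0 : EuclideanSpace ℝ (Fin d)) ρ ∪ sphere 0 ρ := by
      intro x hx
      rcases lt_or_eq_of_le (le_csSup hbdd hx) with h | h
      · exact Or.inl (mem_ball_zero_iff.mpr h)
      · exact Or.inr (by simp [mem_sphere_zero_iff_norm, h, hρ])
    calc ν T ≤ ν (ball (0 : EuclideanSpace ℝ (Fin d)) ρ ∪ sphere 0 ρ) := measure_mono hTsub
      _ ≤ ν (ball (0 : EuclideanSpace ℝ (Fin d)) ρ) + ν (sphere 0 ρ) := measure_union_le _ _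
      _ ≤ c + 0 := add_le_add hball (le_of_eq (hac (Measure.addHaar_sphere volume 0 ρ)))
      _ = c := add_zero c
  · have hall : ∀ r : ℝ, φ r < c := by
      intro r
      obtain ⟨r', hr', hrr'⟩ := not_bddAbove_iff.mp hbdd r
      exact hslow r r' hrr'.le hr'
    have huniv : ν univ ≤ c := by
      have hcov : (univ : Set (EuclideanSpace ℝ (Fin d))) = ⋃ n : ℕ, closedBall 0 n := by
        ext x
        simp only [mem_univ, true_iff, mem_iUnion, mem_closedBall, dist_zero_right]
        exact exists_nat_ge ‖x‖
      rw [hcov, Monotone.measure_iUnion (fun n m hnm =>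
        closedBall_subset_closedBall (Nat.cast_le.mpr hnm))]
      exact iSup_le fun n => (hall n).le
    exact le_trans (measure_mono (subset_univ T)) huniv

private lemma measure_setOf_eq_zero (hd : 0 < d) {ν : Measure (EuclideanSpace ℝ (Fin d))}
    (hac : ν ≪ (volume : Measure (EuclideanSpace ℝ (Fin d)))) :
    ν {x : EuclideanSpace ℝ (Fin d) | ν (closedBall 0 ‖x‖) = 0} = 0 := by
  set S := {x : EuclideanSpace ℝ (Fin d) | ν (closedBall 0 ‖x‖) = 0} with hS
  have hsub : ∀ c : ℝ≥0∞, c ≠ 0 → ν S ≤ c := by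
    intro c hc
    refine le_trans (measure_mono ?_) (measure_setOf_lt hd hac c)
    intro x hx
    simp only [hS, mem_setOf_eq] at hx ⊢
    rw [hx]
    exact pos_iff_ne_zero.mpr hc
  by_contra hne
  have h1 : ν S ≤ 1 := hsub 1 one_ne_zero
  have h2 := hsub (ν S / 2) (by
    simp only [ne_eq, ENNReal.div_eq_zero_iff]
    push_neg
    exact ⟨hne, by norm_num⟩)
  have h3 : ν S / 2 < ν S := ENNReal.half_lt_self hne (lt_of_le_of_lt h1 (by norm_num)).ne
  exact absurd (lt_of_le_of_lt h2 h3) (lt_irrefl _)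

private lemma rpow_ofReal_toReal {V : ℝ≥0∞} (q : ℝ) (h0 : V ≠ 0) (ht : V ≠ ⊤) :
    ENNReal.ofReal (V.toReal ^ q) = V ^ q := by
  rw [ENNReal.toReal_rpow, ENNReal.ofReal_toReal]
  simp [ENNReal.rpow_eq_top_iff, h0, ht]

private lemma key_lintegral (hd : 0 < d) {ν : Measure (EuclideanSpace ℝ (Fin d))}
    (hac : ν ≪ (volume : Measure (EuclideanSpace ℝ (Fin d))))
    (hfin : ∀ r : ℝ, ν (closedBall 0 r) ≠ ⊤)
    {R : ℝ} (hV0 : ν (closedBall 0 R) ≠ 0) :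
    ∫⁻ x in ball (0 : EuclideanSpace ℝ (Fin d)) R, (ν (closedBall 0 ‖x‖)) ^ (-(2⁻¹:ℝ)) ∂ν
      ≤ 2 * (ν (closedBall 0 R)) ^ (2⁻¹:ℝ) := by
  set V := ν (closedBall 0 R) with hV
  have hVt : V ≠ ⊤ := hfin R
  have hVtR : 0 < V.toReal := ENNReal.toReal_pos hV0 hVt
  have hφm : Monotone fun r : ℝ => ν (closedBall (0 : EuclideanSpace ℝ (Fin d)) r) :=
    fun r₁ r₂ h => measure_mono (closedBall_subset_closedBall h)
  have hφmeas : Measurable fun x : EuclideanSpace ℝ (Fin d) => ν (closedBall 0 ‖x‖) :=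
    hφm.measurable.comp measurable_norm
  have hcong : ∫⁻ x in ball (0 : EuclideanSpace ℝ (Fin d)) R, (ν (closedBall 0 ‖x‖)) ^ (-(2⁻¹:ℝ)) ∂ν
      = ∫⁻ x in ball (0 : EuclideanSpace ℝ (Fin d)) R,
          ENNReal.ofReal ((ν (closedBall 0 ‖x‖)).toReal ^ (-(2⁻¹:ℝ))) ∂ν := by
    refine lintegral_congr_ae (ae_restrict_of_ae ?_)
    have hnull := measure_setOf_eq_zero hd hac
    rw [ae_iff]
    refine measure_mono_null ?_ hnull
    intro x hx
    simp only [mem_setOf_eq] at hx ⊢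
    by_contra h0
    exact hx (rpow_ofReal_toReal _ h0 (hfin _)).symm
  rw [hcong]
  have hfmeas : Measurable fun x : EuclideanSpace ℝ (Fin d) =>
      (ν (closedBall 0 ‖x‖)).toReal ^ (-(2⁻¹:ℝ)) :=
    (ENNReal.measurable_toReal.comp hφmeas).pow_const _
  rw [lintegral_eq_lintegral_meas_lt (ν.restrict (ball 0 R))
    (ae_of_all _ fun x => Real.rpow_nonneg ENNReal.toReal_nonneg _) hfmeas.aemeasurable]
  have hbound : ∫⁻ t in Ioi (0:ℝ),
      (ν.restrict (ball 0 R)) {x | t < (ν (closedBall 0 ‖x‖)).toReal ^ (-(2⁻¹:ℝ))}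
      ≤ ∫⁻ t in Ioi (0:ℝ), min V (ENNReal.ofReal (t ^ (-2:ℝ))) := by
    refine setLIntegral_mono (measurable_const.min ((measurable_id.pow_const _).ennreal_ofReal))
      fun t ht => le_min ?_ ?_
    · refine le_trans (measure_mono (subset_univ _)) ?_
      rw [Measure.restrict_apply_univ]
      exact measure_mono ball_subset_closedBall
    · refine le_trans (Measure.restrict_apply_le _ _) ?_
      refine le_trans (measure_mono ?_) (measure_setOf_lt hd hac _)
      intro x hx
      simp only [mem_setOf_eq] at hx ⊢
      have ht' : (0:ℝ) < t := ht
      have hs0 : 0 < (ν (closedBall 0 ‖x‖)).toReal := by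
        rcases lt_or_eq_of_le (ENNReal.toReal_nonneg (a := ν (closedBall 0 ‖x‖))) with h | h
        · exact h
        · rw [← h, Real.zero_rpow (by norm_num)] at hx; linarith
      have hst : (ν (closedBall 0 ‖x‖)).toReal < t ^ (-2:ℝ) := by
        have h1 := Real.rpow_lt_rpow_of_neg ht' hx (by norm_num : (-2:ℝ) < 0)
        rwa [← Real.rpow_mul hs0.le, show (-(2⁻¹:ℝ)) * (-2) = 1 by norm_num,
          Real.rpow_one] at h1
      rw [ENNReal.lt_ofReal_iff_toReal_lt (hfin _)]
      exact hst
  refine le_trans hbound ?_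
  have ht₀ : (0:ℝ) < V.toReal ^ (-(2⁻¹:ℝ)) := Real.rpow_pos_of_pos hVtR _
  rw [← Ioc_union_Ioi_eq_Ioi (le_of_lt ht₀),
    lintegral_union measurableSet_Ioi (Set.Ioc_disjoint_Ioi le_rfl)]
  have p1 : ∫⁻ t in Ioc (0:ℝ) (V.toReal ^ (-(2⁻¹:ℝ))), min V (ENNReal.ofReal (t ^ (-2:ℝ)))
      ≤ V ^ (2⁻¹:ℝ) := by
    refine le_trans (setLIntegral_mono measurable_const fun t _ => min_le_left _ _) ?_
    rw [setLIntegral_const, Real.volume_Ioc, sub_zero, rpow_ofReal_toReal _ hV0 hVt]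
    refine le_of_eq ?_
    calc V * V ^ (-(2⁻¹:ℝ)) = V ^ (1:ℝ) * V ^ (-(2⁻¹:ℝ)) := by rw [ENNReal.rpow_one]
      _ = V ^ ((1:ℝ) + -(2⁻¹)) := (ENNReal.rpow_add _ _ hV0 hVt).symm
      _ = V ^ (2⁻¹:ℝ) := by norm_num
  have p2 : ∫⁻ t in Ioi (V.toReal ^ (-(2⁻¹:ℝ))), min V (ENNReal.ofReal (t ^ (-2:ℝ)))
      ≤ V ^ (2⁻¹:ℝ) := by
    refine le_trans (setLIntegral_mono (g := fun t : ℝ => ENNReal.ofReal (t ^ (-2:ℝ)))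
      ((measurable_id.pow_const _).ennreal_ofReal) fun t _ => min_le_right _ _) ?_
    have hint : IntegrableOn (fun t : ℝ => t ^ (-2:ℝ)) (Ioi (V.toReal ^ (-(2⁻¹:ℝ)))) :=
      integrableOn_Ioi_rpow_of_lt (by norm_num) ht₀
    have hnn : 0 ≤ᵐ[volume.restrict (Ioi (V.toReal ^ (-(2⁻¹:ℝ))))] fun t : ℝ => t ^ (-2:ℝ) := by
      filter_upwards [self_mem_ae_restrict (measurableSet_Ioi :
        MeasurableSet (Ioi (V.toReal ^ (-(2⁻¹:ℝ)))))] with t ht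
      exact Real.rpow_nonneg (le_of_lt (lt_trans ht₀ ht)) _
    rw [← ofReal_integral_eq_lintegral_ofReal hint hnn,
      integral_Ioi_rpow_of_lt (by norm_num) ht₀]
    have heq : -(V.toReal ^ (-(2⁻¹:ℝ))) ^ ((-2:ℝ) + 1) / ((-2:ℝ) + 1)
        = V.toReal ^ (2⁻¹:ℝ) := by
      rw [show ((-2:ℝ) + 1) = -1 by norm_num, ← Real.rpow_mul hVtR.le,
        show (-(2⁻¹:ℝ)) * (-1) = 2⁻¹ by norm_num]
      ring
    rw [heq]
    exact le_of_eq (rpow_ofReal_toReal _ hV0 hVt)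
  calc _ ≤ V ^ (2⁻¹:ℝ) + V ^ (2⁻¹:ℝ) := add_le_add p1 p2
    _ = 2 * V ^ (2⁻¹:ℝ) := (two_mul _).symm

/-- An `L²_k`-atom supported in the closed ball of center `x₀` and radius `r`. -/
def IsL2Atom {d : ℕ} (ν : Measure (EuclideanSpace ℝ (Fin d)))
    (a : EuclideanSpace ℝ (Fin d) → ℝ) (x₀ : EuclideanSpace ℝ (Fin d)) (r : ℝ) : Prop :=
  MemLp a 2 ν ∧ Function.support a ⊆ closedBall x₀ r ∧
    (∫ x, |a x| ^ 2 ∂ν) ^ ((1 : ℝ)/2) ≤ (ν (closedBall x₀ r)).toReal ^ (-(1 : ℝ)/2) ∧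
    ∫ x in closedBall x₀ r, a x ∂ν = 0

/-- The Hardy-type averaging operator `H_k`. -/
def hardyOp {d : ℕ} (ν : Measure (EuclideanSpace ℝ (Fin d)))
    (f : EuclideanSpace ℝ (Fin d) → ℝ) (x : EuclideanSpace ℝ (Fin d)) : ℝ :=
  (ν (closedBall 0 ‖x‖)).toReal⁻¹ * ∫ y in closedBall (0 : EuclideanSpace ℝ (Fin d)) ‖x‖, f y ∂ν

section Aux2

variable {d : ℕ}

private lemma atom_integrable {ν : Measure (EuclideanSpace ℝ (Fin d))}
    (hfin : ∀ r : ℝ, ν (closedBall 0 r) ≠ ⊤)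
    {a : EuclideanSpace ℝ (Fin d) → ℝ} {R : ℝ}
    (hmem : MemLp a 2 ν) (hsupp : Function.support a ⊆ closedBall 0 R) :
    Integrable a ν := by
  haveI : IsFiniteMeasure (ν.restrict (closedBall (0 : EuclideanSpace ℝ (Fin d)) R)) := ⟨by
    rw [Measure.restrict_apply_univ]; exact (hfin R).lt_top⟩
  have h1 : Integrable a (ν.restrict (closedBall 0 R)) :=
    (hmem.restrict _).integrable one_le_two
  have h2 : a = Set.indicator (closedBall 0 R) a := (indicator_eq_self.mpr hsupp).symm
  rw [h2]
  exact (integrable_indicator_iff measurableSet_closedBall).mpr h1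

private lemma hardyOp_measurable {ν : Measure (EuclideanSpace ℝ (Fin d))}
    {a : EuclideanSpace ℝ (Fin d) → ℝ} (hint : Integrable a ν) :
    Measurable (hardyOp ν a) := by
  have hφm : Monotone fun r : ℝ => ν (closedBall (0 : EuclideanSpace ℝ (Fin d)) r) :=
    fun r₁ r₂ h => measure_mono (closedBall_subset_closedBall h)
  have h1 : Measurable fun r : ℝ =>
      (ν (closedBall (0 : EuclideanSpace ℝ (Fin d)) r)).toReal⁻¹ :=
    (ENNReal.measurable_toReal.comp hφm.measurable).inv
  have hposm : Monotone fun r : ℝ =>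
      ∫ y in closedBall (0 : EuclideanSpace ℝ (Fin d)) r, max (a y) 0 ∂ν := by
    intro r₁ r₂ h
    exact setIntegral_mono_set hint.pos_part.integrableOn
      (ae_of_all _ fun y => le_max_right _ _)
      ((closedBall_subset_closedBall h).eventuallyLE)
  have hnegm : Monotone fun r : ℝ =>
      ∫ y in closedBall (0 : EuclideanSpace ℝ (Fin d)) r, max (-a y) 0 ∂ν := by
    intro r₁ r₂ h
    exact setIntegral_mono_set hint.neg.pos_part.integrableOn
      (ae_of_all _ fun y => le_max_right _ _)
      ((closedBall_subset_closedBall h).eventuallyLE)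
  have hmeas2 : Measurable fun r : ℝ =>
      ∫ y in closedBall (0 : EuclideanSpace ℝ (Fin d)) r, a y ∂ν := by
    have hdecomp : (fun r : ℝ => ∫ y in closedBall (0 : EuclideanSpace ℝ (Fin d)) r, a y ∂ν)
        = fun r : ℝ => (∫ y in closedBall (0 : EuclideanSpace ℝ (Fin d)) r, max (a y) 0 ∂ν)
          - ∫ y in closedBall (0 : EuclideanSpace ℝ (Fin d)) r, max (-a y) 0 ∂ν := by
      funext r
      have e2 : ∫ y in closedBall (0 : EuclideanSpace ℝ (Fin d)) r, a y ∂ν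
          = ∫ y in closedBall (0 : EuclideanSpace ℝ (Fin d)) r,
              (max (a y) 0 - max (-a y) 0) ∂ν :=
        integral_congr_ae (ae_of_all _ fun y =>
          (max_zero_sub_max_neg_zero_eq_self (a y)).symm)
      refine e2.trans (integral_sub ?_ ?_)
      · exact hint.pos_part.integrableOn
      · exact hint.neg.pos_part.integrableOn
    rw [hdecomp]
    exact hposm.measurable.sub hnegm.measurable
  exact (h1.mul hmeas2).comp measurable_norm

private lemma atom_lintegral_le (hd : 0 < d) {ν : Measure (EuclideanSpace ℝ (Fin d))}
    (hac : ν ≪ (volume : Measure (EuclideanSpace ℝ (Fin d))))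
    (hfin : ∀ r : ℝ, ν (closedBall 0 r) ≠ ⊤)
    {a : EuclideanSpace ℝ (Fin d) → ℝ} {R : ℝ}
    (hA : IsL2Atom ν a 0 R) :
    ∫⁻ x, ‖hardyOp ν a x‖₊ ∂ν ≤ 2 := by
  obtain ⟨hmem, hsupp, hnorm, hzero⟩ := hA
  have hint : Integrable a ν := atom_integrable hfin hmem hsupp
  have hvanish : ∀ x : EuclideanSpace ℝ (Fin d), R ≤ ‖x‖ → hardyOp ν a x = 0 := by
    intro x hx
    have h1 : ∫ y in closedBall (0 : EuclideanSpace ℝ (Fin d)) ‖x‖, a y ∂ν = ∫ y, a y ∂ν :=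
      setIntegral_eq_integral_of_forall_compl_eq_zero fun y hy =>
        Function.notMem_support.mp fun hmem' =>
          hy (closedBall_subset_closedBall hx (hsupp hmem'))
    have h2 : ∫ y in closedBall (0 : EuclideanSpace ℝ (Fin d)) R, a y ∂ν = ∫ y, a y ∂ν :=
      setIntegral_eq_integral_of_forall_compl_eq_zero fun y hy =>
        Function.notMem_support.mp fun hmem' => hy (hsupp hmem')
    simp only [hardyOp]
    rw [h1, ← h2, hzero, mul_zero]
  by_cases hS : eLpNorm a 2 ν = 0
  · have ha0 : a =ᵐ[ν] 0 := (eLpNorm_eq_zero_iff hmem.aestronglyMeasurable two_ne_zero).mp hS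
    have hH : ∀ x, hardyOp ν a x = 0 := by
      intro x
      simp only [hardyOp]
      rw [integral_congr_ae (ae_restrict_of_ae ha0)]
      simp
    calc ∫⁻ x, (‖hardyOp ν a x‖₊ : ℝ≥0∞) ∂ν = 0 := by simp [hH]
      _ ≤ 2 := zero_le
  · have hint2 : Integrable (fun x => |a x| ^ 2) ν := by
      have := hmem.integrable_norm_rpow two_ne_zero ENNReal.ofNat_ne_top
      refine this.congr (ae_of_all _ fun x => ?_)
      show ‖a x‖ ^ ((2:ℝ≥0∞).toReal) = |a x| ^ 2
      rw [show ((2:ℝ≥0∞).toReal) = ((2:ℕ):ℝ) by norm_num, Real.rpow_natCast, Real.norm_eq_abs]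
    set V := ν (closedBall (0 : EuclideanSpace ℝ (Fin d)) R) with hV
    have hVt : V ≠ ⊤ := hfin R
    have hV0 : V ≠ 0 := by
      intro h0
      apply hS
      have hVr : V.toReal = 0 := by rw [h0]; simp
      rw [hVr, Real.zero_rpow (by norm_num)] at hnorm
      have hnn : 0 ≤ ∫ x, |a x| ^ 2 ∂ν := integral_nonneg fun x => by positivity
      have h00 : (∫ x, |a x| ^ 2 ∂ν) = 0 := by
        by_contra hne
        have hpos : 0 < ∫ x, |a x| ^ 2 ∂ν := lt_of_le_of_ne hnn (Ne.symm hne)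
        have := Real.rpow_pos_of_pos hpos ((1:ℝ)/2)
        linarith
      have ha0 : (fun x => |a x| ^ 2) =ᵐ[ν] 0 :=
        (integral_eq_zero_iff_of_nonneg (fun x => by positivity) hint2).mp h00
      have ha0' : a =ᵐ[ν] 0 := ha0.mono fun x hx => by
        have : |a x| ^ 2 = 0 := hx
        have := pow_eq_zero_iff (n := 2) (by norm_num) |>.mp this
        simpa using abs_eq_zero.mp this
      rw [eLpNorm_congr_ae ha0', eLpNorm_zero]
    have hSle : eLpNorm a 2 ν ≤ V ^ (-(2⁻¹:ℝ)) := by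
      rw [hmem.eLpNorm_eq_integral_rpow_norm two_ne_zero ENNReal.ofNat_ne_top]
      refine le_trans (ENNReal.ofReal_le_ofReal ?_) (le_of_eq (rpow_ofReal_toReal _ hV0 hVt))
      have e1 : (∫ x, ‖a x‖ ^ ((2:ℝ≥0∞).toReal) ∂ν) = ∫ x, |a x| ^ 2 ∂ν :=
        integral_congr_ae (ae_of_all _ fun x => by
          show ‖a x‖ ^ ((2:ℝ≥0∞).toReal) = |a x| ^ 2
          rw [show ((2:ℝ≥0∞).toReal) = ((2:ℕ):ℝ) by norm_num, Real.rpow_natCast,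
            Real.norm_eq_abs])
      rw [e1, show ((2:ℝ≥0∞).toReal⁻¹) = (1:ℝ)/2 by norm_num,
        show (-(2⁻¹:ℝ)) = -(1:ℝ)/2 by norm_num]
      exact hnorm
    have hφmeas : Measurable fun x : EuclideanSpace ℝ (Fin d) => ν (closedBall 0 ‖x‖) :=
      (Monotone.measurable fun r₁ r₂ h =>
        measure_mono (closedBall_subset_closedBall h)).comp measurable_norm
    have hptwise : ∀ x : EuclideanSpace ℝ (Fin d), (‖hardyOp ν a x‖₊ : ℝ≥0∞) ≤
        eLpNorm a 2 ν * Set.indicator (ball (0 : EuclideanSpace ℝ (Fin d)) R)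
          (fun y => (ν (closedBall 0 ‖y‖)) ^ (-(2⁻¹:ℝ))) x := by
      intro x
      by_cases hxR : R ≤ ‖x‖
      · rw [hvanish x hxR, Set.indicator_of_notMem (by
          simp only [mem_ball_zero_iff, not_lt]; exact hxR)]
        simp
      · push_neg at hxR
        rw [Set.indicator_of_mem (mem_ball_zero_iff.mpr hxR)]
        by_cases h0 : ν (closedBall (0 : EuclideanSpace ℝ (Fin d)) ‖x‖) = 0
        · rw [h0, ENNReal.zero_rpow_of_neg (by norm_num), ENNReal.mul_top hS]
          exact le_top
        · have hfx : ν (closedBall (0 : EuclideanSpace ℝ (Fin d)) ‖x‖) ≠ ⊤ := hfin _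
          have step1 : (‖hardyOp ν a x‖₊ : ℝ≥0∞) ≤
              (ν (closedBall (0 : EuclideanSpace ℝ (Fin d)) ‖x‖))⁻¹
                * ∫⁻ y in closedBall (0 : EuclideanSpace ℝ (Fin d)) ‖x‖, ‖a y‖₊ ∂ν := by
            simp only [hardyOp]
            rw [nnnorm_mul, ENNReal.coe_mul]
            refine mul_le_mul' (le_of_eq ?_) (enorm_integral_le_lintegral_enorm _)
            rw [← enorm_eq_nnnorm, Real.enorm_eq_ofReal (inv_nonneg.mpr ENNReal.toReal_nonneg), ← ENNReal.toReal_inv,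
              ENNReal.ofReal_toReal (ENNReal.inv_ne_top.mpr h0)]
          have step2 : ∫⁻ y in closedBall (0 : EuclideanSpace ℝ (Fin d)) ‖x‖, ‖a y‖₊ ∂ν ≤
              eLpNorm a 2 ν * (ν (closedBall (0 : EuclideanSpace ℝ (Fin d)) ‖x‖)) ^ (2⁻¹:ℝ) := by
            have hcs := eLpNorm_le_eLpNorm_mul_rpow_measure_univ (p := 1) (q := 2)
              one_le_two (hmem.aestronglyMeasurable.restrict
                (s := closedBall (0 : EuclideanSpace ℝ (Fin d)) ‖x‖))
            rw [eLpNorm_one_eq_lintegral_enorm, Measure.restrict_apply_univ] at hcs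
            refine le_trans hcs (mul_le_mul' (eLpNorm_mono_measure _ Measure.restrict_le_self)
              (le_of_eq (by norm_num)))
          calc (‖hardyOp ν a x‖₊ : ℝ≥0∞)
              ≤ (ν (closedBall (0 : EuclideanSpace ℝ (Fin d)) ‖x‖))⁻¹
                * (eLpNorm a 2 ν * (ν (closedBall (0 : EuclideanSpace ℝ (Fin d)) ‖x‖)) ^ (2⁻¹:ℝ)) :=
                le_trans step1 (mul_le_mul_right step2 _)
            _ = eLpNorm a 2 ν * ((ν (closedBall (0 : EuclideanSpace ℝ (Fin d)) ‖x‖))⁻¹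
                * (ν (closedBall (0 : EuclideanSpace ℝ (Fin d)) ‖x‖)) ^ (2⁻¹:ℝ)) := by ring
            _ = eLpNorm a 2 ν
                * (ν (closedBall (0 : EuclideanSpace ℝ (Fin d)) ‖x‖)) ^ (-(2⁻¹:ℝ)) := by
                congr 1
                rw [← ENNReal.rpow_neg_one, ← ENNReal.rpow_add _ _ h0 hfx]
                norm_num
    calc ∫⁻ x, (‖hardyOp ν a x‖₊ : ℝ≥0∞) ∂ν
        ≤ ∫⁻ x, eLpNorm a 2 ν * Set.indicator (ball (0 : EuclideanSpace ℝ (Fin d)) R)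
            (fun y => (ν (closedBall 0 ‖y‖)) ^ (-(2⁻¹:ℝ))) x ∂ν := lintegral_mono hptwise
      _ = eLpNorm a 2 ν * ∫⁻ x, Set.indicator (ball (0 : EuclideanSpace ℝ (Fin d)) R)
            (fun y => (ν (closedBall 0 ‖y‖)) ^ (-(2⁻¹:ℝ))) x ∂ν :=
          lintegral_const_mul _ ((hφmeas.pow_const _).indicator measurableSet_ball)
      _ = eLpNorm a 2 ν * ∫⁻ x in ball (0 : EuclideanSpace ℝ (Fin d)) R,
            (ν (closedBall 0 ‖x‖)) ^ (-(2⁻¹:ℝ)) ∂ν := by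
          congr 1
          exact lintegral_indicator measurableSet_ball _
      _ ≤ V ^ (-(2⁻¹:ℝ)) * (2 * V ^ (2⁻¹:ℝ)) :=
          mul_le_mul' hSle (key_lintegral hd hac hfin hV0)
      _ = 2 * (V ^ (-(2⁻¹:ℝ)) * V ^ (2⁻¹:ℝ)) := by ring
      _ = 2 * 1 := by rw [← ENNReal.rpow_add _ _ hV0 hVt]; norm_num
      _ = 2 := mul_one 2

end Aux2

/-- If `f = ∑_{j=1}^N λ_j a_j` is a finite linear combination of `L²_k`-atoms, each supported
in a closed ball centered at the origin, then `‖H_k f‖_{L¹(ν_k)} ≤ 2 ∑ |λ_j|`. -/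
theorem eLpNorm_one_hardyOp_finite_combination {d : ℕ} (hd : 0 < d)
    (Rp : Finset (EuclideanSpace ℝ (Fin d))) (hRp : ∀ ξ ∈ Rp, ξ ≠ 0)
    (k : EuclideanSpace ℝ (Fin d) → ℝ) (hk : ∀ ξ ∈ Rp, 0 ≤ k ξ)
    (N : ℕ) (lam : Fin N → ℝ) (a : Fin N → EuclideanSpace ℝ (Fin d) → ℝ)
    (ha : ∀ j, ∃ R : ℝ, 0 < R ∧ IsL2Atom (dunklMeasure Rp k) (a j) 0 R) :
    eLpNorm (hardyOp (dunklMeasure Rp k) (fun x => ∑ j, lam j * a j x)) 1 (dunklMeasure Rp k)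
      ≤ ENNReal.ofReal (2 * ∑ j, |lam j|) := by
  classical
  set ν := dunklMeasure Rp k with hν
  have hac : ν ≪ (volume : Measure (EuclideanSpace ℝ (Fin d))) :=
    withDensity_absolutelyContinuous _ _
  have hfin : ∀ r : ℝ, ν (closedBall 0 r) ≠ ⊤ := dunklMeasure_ball_ne_top Rp k hk
  choose Rj hRj hAtom using ha
  have hmem : ∀ j, MemLp (a j) 2 ν := fun j => (hAtom j).1
  have hint : ∀ j, Integrable (a j) ν := fun j => atom_integrable hfin (hmem j) (hAtom j).2.1
  have hHlin : ∀ x, hardyOp ν (fun y => ∑ j, lam j * a j y) x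
      = ∑ j, lam j * hardyOp ν (a j) x := by
    intro x
    simp only [hardyOp]
    rw [integral_finset_sum _ (fun j _ => ((hint j).integrableOn).const_mul (lam j)),
      Finset.mul_sum]
    refine Finset.sum_congr rfl fun j _ => ?_
    rw [integral_const_mul]
    ring
  rw [eLpNorm_one_eq_lintegral_enorm]
  have hmono : ∀ x, (‖hardyOp ν (fun y => ∑ j, lam j * a j y) x‖₊ : ℝ≥0∞)
      ≤ ∑ j, ENNReal.ofReal |lam j| * (‖hardyOp ν (a j) x‖₊ : ℝ≥0∞) := by
    intro x
    rw [hHlin x]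
    refine le_trans (ENNReal.coe_le_coe.mpr (nnnorm_sum_le _ _)) ?_
    rw [ENNReal.coe_finset_sum]
    refine Finset.sum_le_sum fun j _ => ?_
    rw [nnnorm_mul, ENNReal.coe_mul]
    refine mul_le_mul' (le_of_eq ?_) le_rfl
    rw [← enorm_eq_nnnorm, ← ofReal_norm_eq_enorm, Real.norm_eq_abs]
  calc ∫⁻ x, (‖hardyOp ν (fun y => ∑ j, lam j * a j y) x‖₊ : ℝ≥0∞) ∂ν
      ≤ ∫⁻ x, ∑ j, ENNReal.ofReal |lam j| * (‖hardyOp ν (a j) x‖₊ : ℝ≥0∞) ∂ν :=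
        lintegral_mono hmono
    _ = ∑ j, ∫⁻ x, ENNReal.ofReal |lam j| * (‖hardyOp ν (a j) x‖₊ : ℝ≥0∞) ∂ν :=
        lintegral_finset_sum _ (fun j _ => measurable_const.mul
          (hardyOp_measurable (hint j)).enorm)
    _ = ∑ j, ENNReal.ofReal |lam j| * ∫⁻ x, (‖hardyOp ν (a j) x‖₊ : ℝ≥0∞) ∂ν :=
        Finset.sum_congr rfl fun j _ => lintegral_const_mul _
          (hardyOp_measurable (hint j)).enorm
    _ ≤ ∑ j, ENNReal.ofReal |lam j| * 2 :=
        Finset.sum_le_sum fun j _ =>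
          mul_le_mul_right (atom_lintegral_le hd hac hfin (hAtom j)) _
    _ = ENNReal.ofReal (2 * ∑ j, |lam j|) := by
        rw [← Finset.sum_mul, ← ENNReal.ofReal_sum_of_nonneg (fun j _ => abs_nonneg _),
          ENNReal.ofReal_mul (by norm_num), ENNReal.ofReal_ofNat, mul_comm]
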